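/- Let F ∈ H^∞_{m×m} be a normal symbol (F(t) normal for a.e. t on the unit circle). If F is degenerate, i.e., there exists c ∈ ℂ with det(F(t) − cI) ≡ 0 on the unit disc, then the subspace L = {x ∈ H²_m : Fx = cx a.e. on 𝕋} is nonzero, closed, and invariant under both T_F and T_F*; hence T_F is not a pure subnormal operator. -/

import Mathlib

open MeasureTheory Complex Matrix AddCircle
open scoped ComplexInnerProductSpace Real

noncomputable section

local instance : Fact ((0:ℝ) < 2 * Real.pi) := ⟨by positivity⟩

/-- `ℂ^m` with its Euclidean structure. -/
abbrev Ee (m : ℕ) := EuclideanSpace ℂ (Fin m)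

/-- The Hilbert space `L²(𝕋, ℂ^m)`, realized over the circle of circumference `2π`. -/
abbrev L2C (m : ℕ) := Lp (Ee m) 2 (haarAddCircle : Measure (AddCircle (2 * Real.pi)))

/-- The Hardy space `H²_m`: elements whose negative Fourier coefficients vanish. -/
def HardyM (m : ℕ) : Set (L2C m) :=
  {f | ∀ n : ℤ, n < 0 → fourierCoeff (⇑f) n = 0}

/-- Pointwise action of a matrix-valued symbol on a `ℂ^m`-valued function. -/
def matAct {m : ℕ} (G : AddCircle (2 * Real.pi) → Matrix (Fin m) (Fin m) ℂ)
    (f : AddCircle (2 * Real.pi) → Ee m) : AddCircle (2 * Real.pi) → Ee m :=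
  fun t => (WithLp.equiv 2 (Fin m → ℂ)).symm ((G t).mulVec (WithLp.equiv 2 (Fin m → ℂ) (f t)))
set_option linter.unusedSectionVars false
set_option linter.unusedTactic false

namespace Deg

abbrev TT := AddCircle (2 * Real.pi)
abbrev mu : Measure TT := haarAddCircle

lemma norm_fourier_apply (n : ℤ) (t : TT) : ‖fourier n t‖ = 1 := by
  rw [fourier_apply]; exact Circle.norm_coe _

lemma memLtop_fourier (n : ℤ) : MemLp (⇑(fourier n : C(TT, ℂ))) ⊤ mu :=
  memLp_top_of_bound (fourier n).continuous.aestronglyMeasurable 1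
    (Filter.Eventually.of_forall fun t => le_of_eq (norm_fourier_apply n t))

variable {E : Type} [NormedAddCommGroup E] [NormedSpace ℂ E] [CompleteSpace E]

lemma integrable_of_bdd {f : TT → E} (hm : AEStronglyMeasurable f mu)
    {C : ℝ} (hb : ∀ t, ‖f t‖ ≤ C) : Integrable f mu :=
  (integrable_const C).mono' hm (Filter.Eventually.of_forall hb)

lemma memL2_of_bdd {f : TT → E} (hm : AEStronglyMeasurable f mu)
    {C : ℝ} (hb : ∀ t, ‖f t‖ ≤ C) : MemLp f 2 mu :=
  MemLp.of_bound hm C (Filter.Eventually.of_forall hb)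

lemma integrable_fourier_smul (n : ℤ) {f : TT → E} (hf : Integrable f mu) :
    Integrable (fun t => fourier n t • f t) mu :=
  hf.smul_of_top_right (memLtop_fourier n)

lemma fourierCoeff_congr_ae {f g : TT → E} {n : ℤ} (h : f =ᵐ[mu] g) :
    fourierCoeff f n = fourierCoeff g n := by
  simp only [fourierCoeff]
  exact integral_congr_ae (h.mono fun t ht => by simp only [ht])

lemma fourierCoeff_add' {f g : TT → E} {n : ℤ} (hf : Integrable f mu) (hg : Integrable g mu) :
    fourierCoeff (fun t => f t + g t) n = fourierCoeff f n + fourierCoeff g n := by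
  simp only [fourierCoeff, smul_add]
  exact integral_add (integrable_fourier_smul _ hf) (integrable_fourier_smul _ hg)

lemma fourierCoeff_neg' {f : TT → E} {n : ℤ} :
    fourierCoeff (fun t => -(f t)) n = -fourierCoeff f n := by
  simp only [fourierCoeff, smul_neg]
  exact integral_neg _

lemma integral_fourier_eq_zero {k : ℤ} (hk : k ≠ 0) : ∫ t, fourier k t ∂mu = 0 :=
  integral_eq_zero_of_add_right_eq_neg (fourier_add_half_inv_index hk Fact.out)

lemma fourierCoeff_const {v : E} {n : ℤ} (hn : n ≠ 0) :
    fourierCoeff (fun _ : TT => v) n = 0 := by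
  simp only [fourierCoeff]
  rw [integral_smul_const, integral_fourier_eq_zero (neg_ne_zero.mpr hn), zero_smul]

/-- Scalar bounded-analytic class. -/
def Hc (g : TT → ℂ) : Prop :=
  Measurable g ∧ (∃ C, ∀ t, ‖g t‖ ≤ C) ∧ ∀ n : ℤ, n < 0 → fourierCoeff g n = 0

lemma Hc.integrable {g : TT → ℂ} (hg : Hc g) : Integrable g mu := by
  obtain ⟨hm, ⟨C, hC⟩, -⟩ := hg
  exact integrable_of_bdd hm.aestronglyMeasurable hC

lemma Hc.memL2 {g : TT → ℂ} (hg : Hc g) : MemLp g 2 mu := by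
  obtain ⟨hm, ⟨C, hC⟩, -⟩ := hg
  exact memL2_of_bdd hm.aestronglyMeasurable hC

lemma Hc_const (a : ℂ) : Hc (fun _ => a) :=
  ⟨measurable_const, ⟨‖a‖, fun _ => le_rfl⟩, fun _ hn => fourierCoeff_const (by omega)⟩

lemma Hc.add {f g : TT → ℂ} (hf : Hc f) (hg : Hc g) : Hc (fun t => f t + g t) := by
  obtain ⟨hfm, ⟨Cf, hCf⟩, hfc⟩ := hf
  obtain ⟨hgm, ⟨Cg, hCg⟩, hgc⟩ := hg
  refine ⟨hfm.add hgm, ⟨Cf + Cg, fun t => (norm_add_le _ _).trans (add_le_add (hCf t) (hCg t))⟩,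
    fun n hn => ?_⟩
  rw [fourierCoeff_add' (integrable_of_bdd hfm.aestronglyMeasurable hCf)
    (integrable_of_bdd hgm.aestronglyMeasurable hCg), hfc n hn, hgc n hn, add_zero]

lemma Hc.neg {f : TT → ℂ} (hf : Hc f) : Hc (fun t => -(f t)) := by
  obtain ⟨hfm, ⟨Cf, hCf⟩, hfc⟩ := hf
  exact ⟨hfm.neg, ⟨Cf, fun t => (norm_neg _).le.trans (hCf t)⟩,
    fun n hn => by rw [fourierCoeff_neg', hfc n hn, neg_zero]⟩

lemma Hc.mul {f g : TT → ℂ} (hf : Hc f) (hg : Hc g) : Hc (fun t => f t * g t) := by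
  obtain ⟨hfm, ⟨Cf, hCf⟩, hfc⟩ := hf
  obtain ⟨hgm, ⟨Cg, hCg⟩, hgc⟩ := hg
  have hCf0 : 0 ≤ Cf := le_trans (norm_nonneg _) (hCf 0)
  refine ⟨hfm.mul hgm, ⟨Cf * Cg, fun t => by
    rw [norm_mul]; exact mul_le_mul (hCf t) (hCg t) (norm_nonneg _) hCf0⟩, fun n hn => ?_⟩
  classical
  set u : TT → ℂ := fun t => fourier n t * (starRingEnd ℂ) (f t) with hu
  have hum : Measurable u := ((fourier n).continuous.measurable).mul (continuous_star.measurable.comp hfm)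
  have hub : ∀ t, ‖u t‖ ≤ Cf := fun t => by
    rw [norm_mul, norm_fourier_apply, one_mul, RCLike.norm_conj]; exact hCf t
  have hU : MemLp u 2 mu := memL2_of_bdd hum.aestronglyMeasurable hub
  have hG : MemLp g 2 mu := memL2_of_bdd hgm.aestronglyMeasurable hCg
  set U : Lp ℂ 2 mu := hU.toLp u with hUdef
  set G : Lp ℂ 2 mu := hG.toLp g with hGdef
  have hcoefU : ∀ k : ℤ, 0 ≤ k → fourierCoeff u k = 0 := by
    intro k hk
    have hpt : ∀ t, fourier (-k) t • u t = (starRingEnd ℂ) (fourier (-(n - k)) t • f t) := by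
      intro t
      have h1 : (starRingEnd ℂ) (fourier (-(n - k)) t) = fourier (n - k) t := by
        rw [fourier_neg, Complex.conj_conj]
      calc fourier (-k) t • u t
          = (fourier (-k) t * fourier n t) * (starRingEnd ℂ) (f t) := by
            simp only [hu, smul_eq_mul]; ring
        _ = fourier (n - k) t * (starRingEnd ℂ) (f t) := by
            rw [← fourier_add, show -k + n = n - k by ring]
        _ = (starRingEnd ℂ) (fourier (-(n - k)) t • f t) := by
            rw [smul_eq_mul, _root_.map_mul, h1]
    calc fourierCoeff u k
        = ∫ t, (starRingEnd ℂ) (fourier (-(n - k)) t • f t) ∂mu := by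
          simp only [fourierCoeff]
          exact integral_congr_ae (Filter.Eventually.of_forall hpt)
      _ = (starRingEnd ℂ) (∫ t, fourier (-(n - k)) t • f t ∂mu) := integral_conj
      _ = (starRingEnd ℂ) (fourierCoeff f (n - k)) := rfl
      _ = 0 := by rw [hfc _ (by omega), map_zero]
  have key1 : fourierCoeff (fun t => f t * g t) n = ⟪U, G⟫ := by
    rw [MeasureTheory.L2.inner_def]
    have hae : ∀ᵐ t ∂mu, fourier (-n) t • (f t * g t) = ⟪U t, G t⟫ := by
      filter_upwards [hU.coeFn_toLp, hG.coeFn_toLp] with t h1 h2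
      rw [RCLike.inner_apply, h1, h2, hu]
      simp only [_root_.map_mul, ← fourier_neg, Complex.conj_conj, smul_eq_mul]
      ring
    simp only [fourierCoeff]
    exact integral_congr_ae hae
  have key2 : ⟪U, G⟫ = ∑' k : ℤ, (starRingEnd ℂ) (fourierCoeff (⇑U) k) * fourierCoeff (⇑G) k := by
    rw [← fourierBasis.repr.inner_map_map U G, lp.inner_eq_tsum]
    refine tsum_congr fun k => ?_
    rw [RCLike.inner_apply, fourierBasis_repr, fourierBasis_repr, mul_comm]
  rw [key1, key2]
  have hzero : ∀ k : ℤ, (starRingEnd ℂ) (fourierCoeff (⇑U) k) * fourierCoeff (⇑G) k = 0 := by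
    intro k
    rcases lt_or_ge k 0 with hk | hk
    · rw [fourierCoeff_congr_ae (hG.coeFn_toLp), hgc k hk, mul_zero]
    · rw [fourierCoeff_congr_ae (hU.coeFn_toLp), hcoefU k hk, map_zero, zero_mul]
  rw [tsum_congr hzero, tsum_zero]

lemma Hc.finsetSum {ι : Type*} (s : Finset ι) (f : ι → TT → ℂ) (h : ∀ i ∈ s, Hc (f i)) :
    Hc (fun t => ∑ i ∈ s, f i t) := by
  classical
  induction s using Finset.cons_induction with
  | empty => simpa using Hc_const 0
  | cons a s ha ih =>
    simp only [Finset.sum_cons]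
    exact (h a (Finset.mem_cons_self a s)).add
      (ih fun i hi => h i (Finset.mem_cons_of_mem hi))

lemma Hc.finsetProd {ι : Type*} (s : Finset ι) (f : ι → TT → ℂ) (h : ∀ i ∈ s, Hc (f i)) :
    Hc (fun t => ∏ i ∈ s, f i t) := by
  classical
  induction s using Finset.cons_induction with
  | empty => simpa using Hc_const 1
  | cons a s ha ih =>
    simp only [Finset.prod_cons]
    exact (h a (Finset.mem_cons_self a s)).mul
      (ih fun i hi => h i (Finset.mem_cons_of_mem hi))

lemma Hc.sub {f g : TT → ℂ} (hf : Hc f) (hg : Hc g) : Hc (fun t => f t - g t) := by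
  simpa [sub_eq_add_neg] using hf.add hg.neg

lemma Hc.const_mul {f : TT → ℂ} (hf : Hc f) (a : ℂ) : Hc (fun t => a * f t) :=
  (Hc_const a).mul hf

/-- determinants of matrices with `Hc` entries are `Hc`. -/
lemma Hc.det {k : ℕ} (M : TT → Matrix (Fin k) (Fin k) ℂ)
    (h : ∀ i j, Hc (fun t => M t i j)) : Hc (fun t => (M t).det) := by
  have : ∀ t, (M t).det = ∑ σ : Equiv.Perm (Fin k),
      ((Equiv.Perm.sign σ : ℤ) : ℂ) * ∏ i, M t (σ i) i := by
    intro t; rw [Matrix.det_apply']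
  simp only [this]
  exact Hc.finsetSum _ _ fun σ _ =>
    ((Hc.finsetProd _ _ fun i _ => h (σ i) i).const_mul _)

section VectorSide

variable {m : ℕ}

lemma fourierCoeff_apply {f : TT → Ee m} (hf : Integrable f mu) (n : ℤ) (i : Fin m) :
    fourierCoeff f n i = fourierCoeff (fun t => f t i) n := by
  have h := (EuclideanSpace.proj i : Ee m →L[ℂ] ℂ).integral_comp_comm
    (integrable_fourier_smul (-n) hf)
  simp only [fourierCoeff]
  calc (∫ t, fourier (-n) t • f t ∂mu) i
      = EuclideanSpace.proj (𝕜 := ℂ) i (∫ t, fourier (-n) t • f t ∂mu) := by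
        rfl
    _ = ∫ t, EuclideanSpace.proj (𝕜 := ℂ) i (fourier (-n) t • f t) ∂mu := h.symm
    _ = ∫ t, fourier (-n) t • f t i ∂mu :=
        integral_congr_ae (Filter.Eventually.of_forall fun t => by
          simp [smul_eq_mul])

lemma integrable_coeFn (f : L2C m) : Integrable (⇑f) mu :=
  (Lp.memLp f).integrable one_le_two


lemma hardy_coeFn_comp {f : L2C m} (hf : f ∈ HardyM m) {n : ℤ} (hn : n < 0) (i : Fin m) :
    fourierCoeff (fun t => f t i) n = 0 := by
  rw [← fourierCoeff_apply (integrable_coeFn f), hf n hn]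
  rfl

lemma mem_hardy_toLp {f : TT → Ee m} (hmeas : AEStronglyMeasurable f mu) {C : ℝ}
    (hb : ∀ t, ‖f t‖ ≤ C)
    (hcomp : ∀ i, ∀ n : ℤ, n < 0 → fourierCoeff (fun t => f t i) n = 0) :
    ((memL2_of_bdd hmeas hb).toLp f : L2C m) ∈ HardyM m := by
  intro n hn
  rw [fourierCoeff_congr_ae (MemLp.coeFn_toLp _)]
  ext i
  rw [fourierCoeff_apply (integrable_of_bdd hmeas hb) n i, hcomp i n hn]
  rfl

lemma symbol_entries_Hc {F : TT → Matrix (Fin m) (Fin m) ℂ}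
    (hFmeas : ∀ i j, Measurable fun t => F t i j) {C : ℝ} (hFbd : ∀ t i j, ‖F t i j‖ ≤ C)
    {MF : L2C m →L[ℂ] L2C m} (hMF : ∀ f : L2C m, ⇑(MF f) =ᵐ[mu] matAct F ⇑f)
    (hAnal : ∀ f : L2C m, f ∈ HardyM m → MF f ∈ HardyM m) (i k : Fin m) :
    Hc (fun t => F t i k) := by
  refine ⟨hFmeas i k, ⟨C, fun t => hFbd t i k⟩, fun n hn => ?_⟩
  set Ek : L2C m := (memLp_const (EuclideanSpace.single k (1:ℂ))).toLp _ with hEkdef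
  have hEkfn : ⇑Ek =ᵐ[mu] fun _ => EuclideanSpace.single k (1:ℂ) := MemLp.coeFn_toLp _
  have hEkH : Ek ∈ HardyM m := fun n' hn' => by
    rw [fourierCoeff_congr_ae hEkfn, fourierCoeff_const (by omega)]
  have h1 := hAnal Ek hEkH n hn
  have hcompt : ∀ t, matAct F (fun _ => EuclideanSpace.single k (1:ℂ)) t i = F t i k := by
    intro t
    show ((F t).mulVec (WithLp.equiv 2 (Fin m → ℂ) (EuclideanSpace.single k (1:ℂ)))) i = F t i k
    rw [show WithLp.equiv 2 (Fin m → ℂ) (EuclideanSpace.single k (1:ℂ)) = Pi.single k 1 from rfl, Matrix.mulVec_single]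
    exact mul_one _
  have h2 : (fun t => F t i k) =ᵐ[mu] fun t => (MF Ek) t i := by
    filter_upwards [hMF Ek, hEkfn] with t ht hek
    have : matAct F (⇑Ek) t = matAct F (fun _ => EuclideanSpace.single k (1:ℂ)) t := by
      simp only [matAct, hek]
    rw [ht, this, hcompt t]
  rw [fourierCoeff_congr_ae h2, ← fourierCoeff_apply (integrable_coeFn (MF Ek)), h1]
  rfl

end VectorSide

lemma normal_mulVec_conj {k : ℕ} {M : Matrix (Fin k) (Fin k) ℂ} (hM : Mᴴ * M = M * Mᴴ)
    {c : ℂ} {v : Fin k → ℂ} (hv : M.mulVec v = c • v) :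
    Mᴴ.mulVec v = (starRingEnd ℂ c) • v := by
  set N := M - c • (1 : Matrix (Fin k) (Fin k) ℂ) with hN
  have hNv : N.mulVec v = 0 := by
    simp [hN, Matrix.sub_mulVec, Matrix.smul_mulVec, Matrix.one_mulVec, hv]
  have hNH : Nᴴ = Mᴴ - (starRingEnd ℂ c) • (1 : Matrix (Fin k) (Fin k) ℂ) := by
    simp [hN, Matrix.conjTranspose_sub, Matrix.conjTranspose_smul, Matrix.conjTranspose_one]
  have hnormal : Nᴴ * N = N * Nᴴ := by
    rw [hNH, hN]
    simp only [Matrix.sub_mul, Matrix.mul_sub, Matrix.smul_mul, Matrix.mul_smul,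
      Matrix.one_mul, Matrix.mul_one, hM, smul_smul]
    module
  have key : star (Nᴴ.mulVec v) ⬝ᵥ (Nᴴ.mulVec v) = 0 := by
    rw [Matrix.star_mulVec, Matrix.conjTranspose_conjTranspose, ← Matrix.dotProduct_mulVec,
      Matrix.mulVec_mulVec, ← hnormal, ← Matrix.mulVec_mulVec, hNv, Matrix.mulVec_zero,
      dotProduct_zero]
  have hw : Nᴴ.mulVec v = 0 := by
    set w := Nᴴ.mulVec v with hwdef
    have hsum : ∑ j, Complex.normSq (w j) = 0 := by
      have h2 : (↑(∑ j, Complex.normSq (w j)) : ℂ) = 0 := by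
        rw [← key]
        simp only [dotProduct, Pi.star_apply, Complex.ofReal_sum]
        refine Finset.sum_congr rfl fun j _ => ?_
        rw [Complex.normSq_eq_conj_mul_self]
        rfl
      exact_mod_cast h2
    funext j
    have hj : Complex.normSq (w j) = 0 :=
      (Finset.sum_eq_zero_iff_of_nonneg fun j _ => Complex.normSq_nonneg _).mp hsum j
        (Finset.mem_univ j)
    simpa using Complex.normSq_eq_zero.mp hj
  have : Mᴴ.mulVec v - (starRingEnd ℂ c) • v = 0 := by
    rw [← hw, hNH]
    simp [Matrix.sub_mulVec, Matrix.smul_mulVec, Matrix.one_mulVec]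
  linear_combination (norm := module) this


section Laplace

variable {m r : ℕ}

lemma snoc_injective {ρ : Fin r → Fin m} (hρ : Function.Injective ρ) {i : Fin m}
    (hi : ∀ l, ρ l ≠ i) : Function.Injective (Fin.snoc ρ i : Fin (r+1) → Fin m) := by
  intro a b hab
  rcases Fin.eq_castSucc_or_eq_last a with ⟨a', rfl⟩ | rfl <;>
    rcases Fin.eq_castSucc_or_eq_last b with ⟨b', rfl⟩ | rfl
  · simp only [Fin.snoc_castSucc] at hab
    rw [hρ hab]
  · simp only [Fin.snoc_castSucc, Fin.snoc_last] at hab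
    exact absurd hab (hi a')
  · simp only [Fin.snoc_castSucc, Fin.snoc_last] at hab
    exact absurd hab.symm (hi b')
  · rfl

lemma laplace_row (A : Matrix (Fin m) (Fin m) ℂ) (ρ : Fin r → Fin m) (σ' : Fin (r+1) → Fin m)
    (i : Fin m) :
    ((A.submatrix (Fin.snoc ρ i) σ')).det =
      ∑ l : Fin (r+1), ((-1 : ℂ)) ^ ((r : ℕ) + (l : ℕ)) * A i (σ' l) *
        (A.submatrix ρ (σ' ∘ (Fin.succAbove l))).det := by
  rw [Matrix.det_succ_row (A.submatrix (Fin.snoc ρ i) σ') (Fin.last r)]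
  refine Finset.sum_congr rfl fun l _ => ?_
  have h1 : (A.submatrix (Fin.snoc ρ i) σ') (Fin.last r) l = A i (σ' l) := by
    simp [Matrix.submatrix_apply, Fin.snoc_last]
  have h2 : (A.submatrix (Fin.snoc ρ i) σ').submatrix (Fin.last r).succAbove l.succAbove
      = A.submatrix ρ (σ' ∘ l.succAbove) := by
    rw [Matrix.submatrix_submatrix]
    congr 1
    funext a
    simp [Fin.succAbove_last, Fin.snoc_castSucc]
  rw [h1, h2, Fin.val_last]

end Laplace

/-- Main construction: a nonzero Hardy-class element of the pointwise kernel of `A`. -/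
lemma exists_hardy_kernel {m : ℕ} {A : TT → Matrix (Fin m) (Fin m) ℂ}
    (hHc : ∀ i j, Hc (fun t => A t i j))
    (hdet : ∀ᵐ t ∂mu, (A t).det = 0) :
    ∃ x : L2C m, x ∈ HardyM m ∧
      (∀ᵐ t ∂mu, (A t).mulVec (WithLp.equiv 2 (Fin m → ℂ) (x t)) = 0) ∧ x ≠ 0 := by
  classical
  haveI : (ae mu).NeBot := ae_neBot.mpr (IsProbabilityMeasure.ne_zero _)
  set P : ℕ → Prop := fun r => ∃ ρ : Fin r ↪ Fin m, ∃ σ : Fin r ↪ Fin m,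
      ¬ ((fun t => ((A t).submatrix ρ σ).det) =ᵐ[mu] (fun _ => (0:ℂ))) with hP
  have hP0 : P 0 := by
    refine ⟨Function.Embedding.ofIsEmpty, Function.Embedding.ofIsEmpty, fun h => ?_⟩
    obtain ⟨t, ht⟩ := h.exists
    simp [Matrix.det_fin_zero] at ht
  have hPm : ¬ P m := by
    rintro ⟨ρ, σ, hne⟩
    apply hne
    have hρb : Function.Bijective ρ := (Finite.injective_iff_bijective).mp ρ.injective
    have hσb : Function.Bijective σ := (Finite.injective_iff_bijective).mp σ.injective
    set e₁ := Equiv.ofBijective _ hρb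
    set e₂ := Equiv.ofBijective _ hσb
    filter_upwards [hdet] with t ht
    have hsub : (A t).submatrix ρ σ =
        ((A t).submatrix e₁ e₁).submatrix id (e₂.trans e₁.symm) := by
      rw [Matrix.submatrix_submatrix]
      funext a b
      simp [e₁, e₂, Matrix.submatrix_apply, Equiv.ofBijective_apply_symm_apply]
    rw [hsub, Matrix.det_permute' (e₂.trans e₁.symm) _,
      Matrix.det_submatrix_equiv_self, ht, mul_zero]
  set r := Nat.findGreatest P m with hr
  have hrle : r ≤ m := Nat.findGreatest_le m
  have hPr : P r := Nat.findGreatest_spec (Nat.zero_le m) hP0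
  have hrm : r < m := lt_of_le_of_ne hrle (fun h => hPm (h ▸ hPr))
  have hPsucc : ∀ (ρ' σ'' : Fin (r+1) ↪ Fin m),
      (fun t => ((A t).submatrix ρ' σ'').det) =ᵐ[mu] (fun _ => (0:ℂ)) := by
    intro ρ' σ''
    by_contra hne
    exact Nat.findGreatest_is_greatest (lt_add_one r) hrm ⟨ρ', σ'', hne⟩
  obtain ⟨ρ, σ, hminor⟩ := hPr
  -- pick a column index not hit by σ
  have hj : ∃ j : Fin m, ∀ l, σ l ≠ j := by
    by_contra h
    push_neg at h
    have hsurj : Function.Surjective σ := fun j => h j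
    have := Fintype.card_le_of_surjective σ hsurj
    simp only [Fintype.card_fin] at this
    omega
  obtain ⟨j, hjσ⟩ := hj
  set σ' : Fin (r+1) → Fin m := Fin.snoc σ j with hσ'
  have hσ'inj : Function.Injective σ' := snoc_injective σ.injective hjσ
  set cof : Fin (r+1) → TT → ℂ := fun l t =>
    ((-1 : ℂ)) ^ ((r : ℕ) + (l : ℕ)) * ((A t).submatrix ρ (σ' ∘ (Fin.succAbove l))).det
    with hcof
  have hcofHc : ∀ l, Hc (cof l) := fun l =>
    (Hc.det _ (fun a b => hHc (ρ a) (σ' (Fin.succAbove l b)))).const_mul _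
  set xk : Fin m → TT → ℂ := fun k t => ∑ l, if σ' l = k then cof l t else 0 with hxk
  have hxkHc : ∀ k, Hc (xk k) := by
    intro k
    apply Hc.finsetSum
    intro l _
    by_cases h : σ' l = k
    · simpa [h] using hcofHc l
    · simpa [h] using Hc_const 0
  set x : TT → Ee m := fun t => (WithLp.equiv 2 (Fin m → ℂ)).symm (fun k => xk k t) with hx
  -- measurability and bound
  have hxmeas : AEStronglyMeasurable x mu := by
    have h1 : Measurable (fun t => (fun k => xk k t)) :=
      measurable_pi_lambda _ fun k => (hxkHc k).1
    have h2 : StronglyMeasurable (fun t => (fun k => xk k t)) := h1.stronglyMeasurable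
    have h3 : StronglyMeasurable
        (fun t => (PiLp.continuousLinearEquiv 2 ℂ (fun _ : Fin m => ℂ)).symm (fun k => xk k t)) :=
      (PiLp.continuousLinearEquiv 2 ℂ (fun _ : Fin m => ℂ)).symm.continuous.comp_stronglyMeasurable h2
    exact (h3.aestronglyMeasurable : AEStronglyMeasurable x mu)
  choose Ck hCk using fun k => (hxkHc k).2.1
  set CC := ∑ k, max (Ck k) 0 with hCC
  have hCCk : ∀ k t, ‖xk k t‖ ≤ CC := by
    intro k t
    calc ‖xk k t‖ ≤ max (Ck k) 0 := le_trans (hCk k t) (le_max_left _ _)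
      _ ≤ CC := Finset.single_le_sum (f := fun k => max (Ck k) 0)
          (fun _ _ => le_max_right _ _) (Finset.mem_univ k)
  have hxbd : ∀ t, ‖x t‖ ≤ Real.sqrt (∑ _k : Fin m, CC^2) := by
    intro t
    rw [EuclideanSpace.norm_eq]
    apply Real.sqrt_le_sqrt
    refine Finset.sum_le_sum fun k _ => ?_
    have : ‖x t k‖ = ‖xk k t‖ := rfl
    rw [this]
    exact pow_le_pow_left₀ (norm_nonneg _) (hCCk k t) 2
  have hxmem : MemLp x 2 mu := memL2_of_bdd hxmeas hxbd
  refine ⟨hxmem.toLp x, ?_, ?_, ?_⟩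
  · exact mem_hardy_toLp hxmeas hxbd (fun i n hn => (hxkHc i).2.2 n hn)
  · -- a.e. kernel property
    have hall : ∀ᵐ t ∂mu, ∀ i : Fin m, ∑ k, A t i k * xk k t = 0 := by
      rw [MeasureTheory.ae_all_iff]
      intro i
      have hpt : ∀ t, ∑ k, A t i k * xk k t =
          ((A t).submatrix (Fin.snoc ρ i) σ').det := by
        intro t
        rw [laplace_row]
        have : ∀ k, A t i k * xk k t = ∑ l, if σ' l = k then A t i (σ' l) * cof l t else 0 := by
          intro k
          rw [hxk, Finset.mul_sum]
          refine Finset.sum_congr rfl fun l _ => ?_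
          by_cases h : σ' l = k
          · simp [h]
          · simp [h]
        simp_rw [this]
        rw [Finset.sum_comm]
        refine Finset.sum_congr rfl fun l _ => ?_
        rw [Finset.sum_ite_eq (Finset.univ) (σ' l) (fun _ => A t i (σ' l) * cof l t)]
        simp [hcof]
        ring
      by_cases hiρ : ∃ l₀, ρ l₀ = i
      · obtain ⟨l₀, hl₀⟩ := hiρ
        refine Filter.Eventually.of_forall fun t => ?_
        rw [hpt t]
        refine Matrix.det_zero_of_row_eq (i := Fin.castSucc l₀) (j := Fin.last r)
          (Fin.castSucc_lt_last l₀).ne ?_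
        funext l
        simp [Matrix.submatrix_apply, Fin.snoc_castSucc, Fin.snoc_last, hl₀]
      · push_neg at hiρ
        have hemb : Function.Injective (Fin.snoc ρ i : Fin (r+1) → Fin m) :=
          snoc_injective ρ.injective hiρ
        have := hPsucc ⟨_, hemb⟩ ⟨σ', hσ'inj⟩
        filter_upwards [this] with t ht
        rw [hpt t]
        exact ht
    filter_upwards [hall, hxmem.coeFn_toLp] with t ht htl
    rw [htl]
    funext i
    simpa [Matrix.mulVec, dotProduct, hx] using ht i
  · -- nonzero
    intro h0
    apply hminor
    have hae : x =ᵐ[mu] 0 := by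
      have h1 : ⇑(hxmem.toLp x) =ᵐ[mu] x := hxmem.coeFn_toLp
      have h2 : ⇑(hxmem.toLp x) =ᵐ[mu] 0 := by rw [h0]; exact MeasureTheory.Lp.coeFn_zero _ _ _
      exact h1.symm.trans h2
    have hxj : ∀ t, xk j t = ((A t).submatrix ρ σ).det := by
      intro t
      show (∑ l : Fin (r+1), if σ' l = j then cof l t else 0) = _
      rw [Finset.sum_eq_single (Fin.last r)]
      · have hlast : σ' (Fin.last r) = j := by simp [hσ']
        rw [if_pos hlast]
        show ((-1 : ℂ)) ^ ((r : ℕ) + ((Fin.last r : Fin (r+1)) : ℕ)) *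
          ((A t).submatrix ρ (σ' ∘ (Fin.succAbove (Fin.last r)))).det = _
        have h1 : σ' ∘ (Fin.last r).succAbove = σ := by
          funext a
          simp [hσ', Fin.succAbove_last, Fin.snoc_castSucc]
        rw [h1, Fin.val_last]
        have h2 : ((-1 : ℂ)) ^ ((r:ℕ) + (r:ℕ)) = 1 := by
          rw [← two_mul, pow_mul]
          norm_num
        rw [h2, one_mul]
      · intro l _ hl
        rcases Fin.eq_castSucc_or_eq_last l with ⟨l', rfl⟩ | rfl
        · rw [if_neg]
          rw [hσ', Fin.snoc_castSucc]
          exact hjσ l'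
        · exact absurd rfl hl
      · intro h
        exact absurd (Finset.mem_univ _) h
    filter_upwards [hae] with t ht
    have : xk j t = 0 := by
      have := congrFun (congrArg (WithLp.equiv 2 (Fin m → ℂ)) ht) j
      simpa [hx] using this
    rw [← hxj t]
    exact this


section Closed
variable {m : ℕ}

lemma hardy_isClosed (m : ℕ) : IsClosed (HardyM m) := by
  classical
  have key : ∀ (n : ℤ) (i : Fin m), ∃ e : L2C m, ∀ f : L2C m,
      ⟪e, f⟫ = fourierCoeff (fun t => f t i) n := by
    intro n i
    have hgc : Continuous (fun t : TT => fourier n t • EuclideanSpace.single i (1:ℂ)) :=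
      (fourier n).continuous.smul continuous_const
    have hbd : ∀ t : TT, ‖fourier n t • EuclideanSpace.single i (1:ℂ)‖ ≤ 1 := by
      intro t
      rw [norm_smul, norm_fourier_apply, one_mul, EuclideanSpace.norm_single, norm_one]
    refine ⟨(memL2_of_bdd hgc.aestronglyMeasurable hbd).toLp _, fun f => ?_⟩
    rw [MeasureTheory.L2.inner_def]
    have hae : ∀ᵐ t ∂mu,
        ⟪((memL2_of_bdd hgc.aestronglyMeasurable hbd).toLp _ : L2C m) t, f t⟫
          = fourier (-n) t • (f t i) := by
      filter_upwards [MemLp.coeFn_toLp (memL2_of_bdd hgc.aestronglyMeasurable hbd)] with t ht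
      rw [ht, inner_smul_left, EuclideanSpace.inner_single_left]
      simp [← fourier_neg]
    rw [integral_congr_ae hae]
    rfl
  have hset : HardyM m = ⋂ (p : {n : ℤ // n < 0}) (i : Fin m),
      {f : L2C m | ⟪Classical.choose (key p.1 i), f⟫ = 0} := by
    ext f
    simp only [Set.mem_iInter, Set.mem_setOf_eq, HardyM]
    constructor
    · intro hf p i
      rw [Classical.choose_spec (key p.1 i) f]
      exact hardy_coeFn_comp hf p.2 i
    · intro h n hn
      ext i
      rw [fourierCoeff_apply (integrable_coeFn f) n i,
        ← Classical.choose_spec (key n i) f, h ⟨n, hn⟩ i]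
      rfl
  rw [hset]
  exact isClosed_iInter fun p => isClosed_iInter fun i =>
    isClosed_eq (innerSL ℂ _).continuous continuous_const

lemma hardy_sub {f g : L2C m} (hf : f ∈ HardyM m) (hg : g ∈ HardyM m) : f - g ∈ HardyM m := by
  intro n hn
  have h1 : ⇑(f - g) =ᵐ[mu] fun t => f t + -(g t) := by
    filter_upwards [Lp.coeFn_sub f g] with t ht
    rw [ht]
    simp [sub_eq_add_neg]
  rw [fourierCoeff_congr_ae h1,
    fourierCoeff_add' (f := ⇑f) (g := fun t => -(g t)) (integrable_coeFn f)
      (integrable_coeFn g).neg,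
    hf n hn, fourierCoeff_neg' (f := ⇑g), hg n hn]
  simp

lemma proj_fix {P : L2C m →L[ℂ] L2C m}
    (hPmem : ∀ f : L2C m, P f ∈ HardyM m)
    (hPorth : ∀ f : L2C m, ∀ g ∈ HardyM m, ⟪f - P f, g⟫ = 0)
    {x : L2C m} (hx : x ∈ HardyM m) : P x = x := by
  have h1 : x - P x ∈ HardyM m := hardy_sub hx (hPmem x)
  have h2 := hPorth x _ h1
  have h3 : x - P x = 0 := by
    have : ⟪x - P x, x - P x⟫ = 0 := by
      have := hPorth x (x - P x) h1
      simpa using this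
    exact inner_self_eq_zero.mp this
  have := sub_eq_zero.mp h3
  exact this.symm

end Closed
end Deg

/-- If `F ∈ H^∞_{m×m}` is a normal symbol that is degenerate, i.e.
`det (F(t) − cI) ≡ 0` for some constant `c`, then
`L = {x ∈ H²_m : Fx = cx a.e.}` is nonzero, closed, and invariant under both `T_F` and
`T_F*`, and `T_F` restricted to it is normal; hence `T_F` is not pure. -/
theorem degenerate_symbol_not_pure {m : ℕ}
    (F : AddCircle (2 * Real.pi) → Matrix (Fin m) (Fin m) ℂ)
    (hFmeas : ∀ i j, Measurable fun t => F t i j)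
    (hFbd : ∃ C : ℝ, ∀ t i j, ‖F t i j‖ ≤ C)
    (P : L2C m →L[ℂ] L2C m)
    (hPmem : ∀ f : L2C m, P f ∈ HardyM m)
    (hPorth : ∀ f : L2C m, ∀ g ∈ HardyM m, ⟪f - P f, g⟫ = 0)
    (MF MFstar : L2C m →L[ℂ] L2C m)
    (hMF : ∀ f : L2C m, ⇑(MF f) =ᵐ[haarAddCircle] matAct F ⇑f)
    (hMFstar : ∀ f : L2C m, ⇑(MFstar f) =ᵐ[haarAddCircle] matAct (fun t => (F t)ᴴ) ⇑f)
    -- `F` is analytic: multiplication by `F` preserves the Hardy space: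
    (hAnal : ∀ f : L2C m, f ∈ HardyM m → MF f ∈ HardyM m)
    -- `F` is a normal symbol:
    (hNormal : ∀ᵐ t ∂(haarAddCircle : Measure (AddCircle (2 * Real.pi))),
      (F t)ᴴ * F t = F t * (F t)ᴴ)
    -- degeneracy: `det (F(t) − cI) = 0` a.e.:
    (c : ℂ)
    (hdeg : ∀ᵐ t ∂(haarAddCircle : Measure (AddCircle (2 * Real.pi))),
      (F t - c • 1).det = 0) :
    -- `L` is nonzero:
    (∃ x : L2C m, (x ∈ HardyM m ∧ MF x = c • x) ∧ x ≠ 0) ∧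
    -- `L` is closed:
    IsClosed {x : L2C m | x ∈ HardyM m ∧ MF x = c • x} ∧
    -- `L` is invariant under `T_F = P ∘ M_F` and `T_F* = P ∘ M_{F*}`:
    (∀ x : L2C m, x ∈ HardyM m → MF x = c • x →
      (P (MF x) ∈ HardyM m ∧ MF (P (MF x)) = c • P (MF x)) ∧
      (P (MFstar x) ∈ HardyM m ∧ MF (P (MFstar x)) = c • P (MFstar x))) ∧
    -- `T_F` and `T_F*` commute on `L`, so `T_F` is normal on `L` and not pure:
    (∀ x : L2C m, x ∈ HardyM m → MF x = c • x →
      P (MFstar (P (MF x))) = P (MF (P (MFstar x)))) := by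
  classical
  obtain ⟨C, hC⟩ := hFbd
  have hHcA : ∀ i j, Deg.Hc (fun t => (F t - c • 1) i j) := by
    intro i j
    have h1 : Deg.Hc (fun t => F t i j) :=
      Deg.symbol_entries_Hc hFmeas hC hMF hAnal i j
    have h2 : Deg.Hc (fun _ => (c • (1 : Matrix (Fin m) (Fin m) ℂ)) i j) := Deg.Hc_const _
    exact h1.sub h2
  -- Part 1 : the nonzero element
  obtain ⟨x, hxH, hxker, hxne⟩ := Deg.exists_hardy_kernel hHcA hdeg
  have hxeig : MF x = c • x := by
    apply MeasureTheory.Lp.ext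
    filter_upwards [hMF x, hxker, MeasureTheory.Lp.coeFn_smul c x] with t h1 h2 h3
    rw [h1, h3]
    have h4 : (F t).mulVec (WithLp.equiv 2 (Fin m → ℂ) (x t)) =
        c • WithLp.equiv 2 (Fin m → ℂ) (x t) := by
      rw [Matrix.sub_mulVec, Matrix.smul_mulVec, Matrix.one_mulVec] at h2
      exact sub_eq_zero.mp h2
    show (WithLp.equiv 2 (Fin m → ℂ)).symm ((F t).mulVec _) = _
    rw [h4, show ∀ v : Fin m → ℂ, (WithLp.equiv 2 (Fin m → ℂ)).symm (c • v) = c • (WithLp.equiv 2 (Fin m → ℂ)).symm v from fun _ => rfl, Equiv.symm_apply_apply]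
    rfl
  -- pointwise eigen property
  have hEig : ∀ y : L2C m, MF y = c • y →
      (∀ᵐ t ∂(haarAddCircle : Measure (AddCircle (2 * Real.pi))),
        (F t).mulVec (WithLp.equiv 2 (Fin m → ℂ) (y t)) =
          c • (WithLp.equiv 2 (Fin m → ℂ) (y t))) := by
    intro y hy
    have h1 : ⇑(MF y) =ᵐ[Deg.mu] ⇑(c • y) := by rw [hy]
    filter_upwards [hMF y, h1, MeasureTheory.Lp.coeFn_smul c y] with t h2 h3 h4
    have h5 : matAct F (⇑y) t = c • (y t) := by
      rw [← h2, h3, h4]; rfl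
    have h6 := congrArg (WithLp.equiv 2 (Fin m → ℂ)) h5
    rw [show ∀ v : Ee m, WithLp.equiv 2 (Fin m → ℂ) (c • v) = c • WithLp.equiv 2 (Fin m → ℂ) v from fun _ => rfl] at h6
    rw [← h6]
    exact (Equiv.apply_symm_apply _ _).symm
  have hMFstarEig : ∀ y : L2C m, MF y = c • y → MFstar y = (starRingEnd ℂ c) • y := by
    intro y hy
    apply MeasureTheory.Lp.ext
    filter_upwards [hMFstar y, hEig y hy, hNormal,
      MeasureTheory.Lp.coeFn_smul ((starRingEnd ℂ) c) y] with t h1 h2 h3 h4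
    rw [h1, h4]
    have h5 : (F t)ᴴ.mulVec (WithLp.equiv 2 (Fin m → ℂ) (y t)) =
        (starRingEnd ℂ c) • (WithLp.equiv 2 (Fin m → ℂ) (y t)) :=
      Deg.normal_mulVec_conj h3 h2
    show (WithLp.equiv 2 (Fin m → ℂ)).symm ((F t)ᴴ.mulVec _) = _
    rw [h5, show ∀ v : Fin m → ℂ, (WithLp.equiv 2 (Fin m → ℂ)).symm ((starRingEnd ℂ c) • v) = (starRingEnd ℂ c) • (WithLp.equiv 2 (Fin m → ℂ)).symm v from fun _ => rfl, Equiv.symm_apply_apply]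
    rfl
  have hclosed : IsClosed {y : L2C m | y ∈ HardyM m ∧ MF y = c • y} := by
    have heq : {y : L2C m | y ∈ HardyM m ∧ MF y = c • y}
        = HardyM m ∩ {y | MF y = c • y} := rfl
    rw [heq]
    exact (Deg.hardy_isClosed m).inter
      (isClosed_eq MF.continuous (continuous_id.const_smul c))
  have hPfix : ∀ y : L2C m, y ∈ HardyM m → P y = y := fun y hy =>
    Deg.proj_fix hPmem hPorth hy
  refine ⟨⟨x, ⟨hxH, hxeig⟩, hxne⟩, hclosed, ?_, ?_⟩
  · intro y hyH hyE
    have hPMF : P (MF y) = c • y := by rw [hyE, _root_.map_smul, hPfix y hyH]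
    have hPMFs : P (MFstar y) = (starRingEnd ℂ c) • y := by
      rw [hMFstarEig y hyE, _root_.map_smul, hPfix y hyH]
    refine ⟨⟨hPmem _, ?_⟩, hPmem _, ?_⟩
    · rw [hPMF, _root_.map_smul, hyE]
    · rw [hPMFs, _root_.map_smul, hyE, smul_comm]
  · intro y hyH hyE
    have hPMF : P (MF y) = c • y := by rw [hyE, _root_.map_smul, hPfix y hyH]
    have hPMFs : P (MFstar y) = (starRingEnd ℂ c) • y := by
      rw [hMFstarEig y hyE, _root_.map_smul, hPfix y hyH]
    rw [hPMF, hPMFs]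
    simp only [_root_.map_smul]
    rw [hMFstarEig y hyE, hyE]
    simp only [_root_.map_smul]
    rw [smul_comm]
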